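/- With the slot weights above, the balanced allocation A* induced by any maximum-weight perfect matching is fPO: for every balanced allocation A, ∑_i v_i(A*_i)/(a_i−b_i) ≥ ∑_i v_i(A_i)/(a_i−b_i). Consequently A* maximizes the weighted welfare with weights α_i = 1/(a_i−b_i), hence is fPO. -/

import Mathlib

open Finset

def IsBalanced (n m k : ℕ) (A : Fin n → Finset (Fin m)) : Prop :=
  (∀ j : Fin m, ∃! i : Fin n, j ∈ A i) ∧ ∀ i : Fin n, (A i).card = k

def IsFracBalanced (n m k : ℕ) (x : Fin n → Fin m → ℝ) : Prop :=
  (∀ i j, 0 ≤ x i j) ∧ (∀ i : Fin n, ∑ j : Fin m, x i j = (k : ℝ)) ∧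
    (∀ j : Fin m, ∑ i : Fin n, x i j = 1)

def IsFPO (n m k : ℕ) (v : Fin n → Fin m → ℝ) (A : Fin n → Finset (Fin m)) : Prop :=
  ¬ ∃ x : Fin n → Fin m → ℝ, IsFracBalanced n m k x ∧
    (∀ i : Fin n, ∑ j ∈ A i, v i j ≤ ∑ j : Fin m, v i j * x i j) ∧
    (∃ i : Fin n, ∑ j ∈ A i, v i j < ∑ j : Fin m, v i j * x i j)

/-- The slot weight: slot `(i, s)` (with `s` counted from 1) and good `j`. -/
noncomputable def slotw (n m k : ℕ) (a b : Fin n → ℝ) (v : Fin n → Fin m → ℝ)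
    (σ : Fin n × Fin k) (j : Fin m) : ℝ :=
  if v σ.1 j = a σ.1 then
    a σ.1 / (a σ.1 - b σ.1) + ((σ.2 : ℝ) + 1) * (1 / (n * k * (k + 1)))
  else b σ.1 / (a σ.1 - b σ.1)

/-! ### Auxiliary lemmas -/

lemma slotw_eq (n m k : ℕ) (a b : Fin n → ℝ) (hab : ∀ i, b i < a i)
    (v : Fin n → Fin m → ℝ) (σ : Fin n × Fin k) (j : Fin m) :
    slotw n m k a b v σ j = b σ.1 / (a σ.1 - b σ.1)
      + ((if v σ.1 j = a σ.1 then (1:ℝ) else 0)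
      + (if v σ.1 j = a σ.1 then ((σ.2 : ℝ) + 1) * (1 / (n * k * (k + 1))) else 0)) := by
  have hd : a σ.1 - b σ.1 ≠ 0 := sub_ne_zero.mpr (hab σ.1).ne'
  unfold slotw
  split
  · have h1 : a σ.1 / (a σ.1 - b σ.1) = b σ.1 / (a σ.1 - b σ.1) + 1 := by
      field_simp
      ring
    rw [h1]; ring
  · ring

lemma sum_slotw (n m k : ℕ) (a b : Fin n → ℝ) (hab : ∀ i, b i < a i)
    (v : Fin n → Fin m → ℝ) (μ' : (Fin n × Fin k) ≃ Fin m) :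
    ∑ σ : Fin n × Fin k, slotw n m k a b v σ (μ' σ)
      = (∑ σ : Fin n × Fin k, b σ.1 / (a σ.1 - b σ.1))
      + ((∑ σ : Fin n × Fin k, if v σ.1 (μ' σ) = a σ.1 then (1:ℝ) else 0)
      + (∑ σ : Fin n × Fin k,
          if v σ.1 (μ' σ) = a σ.1 then ((σ.2 : ℝ) + 1) * (1 / (n * k * (k + 1))) else 0)) := by
  rw [← Finset.sum_add_distrib, ← Finset.sum_add_distrib]
  exact Finset.sum_congr rfl fun σ _ => slotw_eq n m k a b hab v σ (μ' σ)

lemma pert_nonneg (n m k : ℕ) (a : Fin n → ℝ)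
    (v : Fin n → Fin m → ℝ) (μ' : (Fin n × Fin k) ≃ Fin m) :
    0 ≤ ∑ σ : Fin n × Fin k,
        if v σ.1 (μ' σ) = a σ.1 then ((σ.2 : ℝ) + 1) * (1 / (n * k * (k + 1))) else 0 := by
  refine Finset.sum_nonneg fun σ _ => ?_
  split <;> positivity

lemma gauss_sum (k : ℕ) : ∑ s : Fin k, ((s : ℝ) + 1) = k * (k + 1) / 2 := by
  rw [Fin.sum_univ_eq_sum_range (fun i => (i : ℝ) + 1)]
  induction k with
  | zero => simp
  | succ k ih => rw [Finset.sum_range_succ, ih]; push_cast; ring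

lemma pert_le_half (n m k : ℕ) (a : Fin n → ℝ)
    (v : Fin n → Fin m → ℝ) (μ' : (Fin n × Fin k) ≃ Fin m) :
    (∑ σ : Fin n × Fin k,
        if v σ.1 (μ' σ) = a σ.1 then ((σ.2 : ℝ) + 1) * (1 / (n * k * (k + 1))) else 0)
      ≤ 1 / 2 := by
  have h1 : (∑ σ : Fin n × Fin k,
      if v σ.1 (μ' σ) = a σ.1 then ((σ.2 : ℝ) + 1) * (1 / (n * k * (k + 1))) else 0)
      ≤ ∑ σ : Fin n × Fin k, ((σ.2 : ℝ) + 1) * (1 / (n * k * (k + 1))) := by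
    refine Finset.sum_le_sum fun σ _ => ?_
    split
    · exact le_refl _
    · positivity
  refine h1.trans ?_
  have h2 : ∑ σ : Fin n × Fin k, ((σ.2 : ℝ) + 1) * (1 / (n * k * (k + 1)))
      = (n : ℝ) * (k * (k + 1) / 2) * (1 / (n * k * (k + 1))) := by
    rw [Fintype.sum_prod_type]
    rw [Finset.sum_congr rfl fun i _ => (Finset.sum_mul ..).symm]
    rw [Finset.sum_congr rfl (fun (i : Fin n) _ => by rw [gauss_sum k])]
    rw [Finset.sum_const, Finset.card_univ, Fintype.card_fin, nsmul_eq_mul]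
    ring
  rw [h2]
  by_cases hD : ((n : ℝ) * k * (k + 1)) = 0
  · rw [hD]; norm_num
  · rw [show (n : ℝ) * (k * (k + 1) / 2) * (1 / (n * k * (k + 1)))
        = ((n : ℝ) * k * (k + 1)) / ((n : ℝ) * k * (k + 1)) / 2 by ring, div_self hD]

lemma cast_count (n m k : ℕ) (a : Fin n → ℝ) (v : Fin n → Fin m → ℝ)
    (μ' : (Fin n × Fin k) ≃ Fin m) :
    (∑ σ : Fin n × Fin k, if v σ.1 (μ' σ) = a σ.1 then (1:ℝ) else 0)
      = ((∑ σ : Fin n × Fin k, if v σ.1 (μ' σ) = a σ.1 then (1:ℕ) else 0 : ℕ) : ℝ) := by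
  rw [Nat.cast_sum]
  exact Finset.sum_congr rfl fun σ _ => by split <;> simp

lemma count_le (n m k : ℕ) (a b : Fin n → ℝ) (hab : ∀ i, b i < a i)
    (v : Fin n → Fin m → ℝ) (μ μ' : (Fin n × Fin k) ≃ Fin m)
    (hle : ∑ σ : Fin n × Fin k, slotw n m k a b v σ (μ' σ)
      ≤ ∑ σ : Fin n × Fin k, slotw n m k a b v σ (μ σ)) :
    (∑ σ : Fin n × Fin k, if v σ.1 (μ' σ) = a σ.1 then (1:ℝ) else 0)
      ≤ ∑ σ : Fin n × Fin k, if v σ.1 (μ σ) = a σ.1 then (1:ℝ) else 0 := by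
  rw [sum_slotw n m k a b hab v μ', sum_slotw n m k a b hab v μ] at hle
  have hP1 := pert_nonneg n m k a v μ'
  have hP2 := pert_le_half n m k a v μ
  have hkey : (∑ σ : Fin n × Fin k, if v σ.1 (μ' σ) = a σ.1 then (1:ℝ) else 0)
      ≤ (∑ σ : Fin n × Fin k, if v σ.1 (μ σ) = a σ.1 then (1:ℝ) else 0) + 1/2 := by
    linarith
  rw [cast_count n m k a v μ', cast_count n m k a v μ] at hkey ⊢
  have : (∑ σ : Fin n × Fin k, if v σ.1 (μ' σ) = a σ.1 then (1:ℕ) else 0)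
      ≤ ∑ σ : Fin n × Fin k, if v σ.1 (μ σ) = a σ.1 then (1:ℕ) else 0 := by
    by_contra hcon
    push_neg at hcon
    have : ((∑ σ : Fin n × Fin k, if v σ.1 (μ σ) = a σ.1 then (1:ℕ) else 0 : ℕ) : ℝ) + 1
        ≤ ((∑ σ : Fin n × Fin k, if v σ.1 (μ' σ) = a σ.1 then (1:ℕ) else 0 : ℕ) : ℝ) := by
      exact_mod_cast hcon
    linarith
  exact_mod_cast this

lemma balanced_equiv (n m k : ℕ) (hm : m = n * k) (B : Fin n → Finset (Fin m))
    (hB : IsBalanced n m k B) :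
    ∃ e : (Fin n × Fin k) ≃ Fin m, ∀ i : Fin n,
      B i = Finset.image (fun s => e (i, s)) Finset.univ := by
  obtain ⟨huniq, hcard⟩ := hB
  let f : Fin n × Fin k → Fin m :=
    fun σ => (((B σ.1).equivFinOfCardEq (hcard σ.1)).symm σ.2 : Fin m)
  have hmem : ∀ σ, f σ ∈ B σ.1 :=
    fun σ => (((B σ.1).equivFinOfCardEq (hcard σ.1)).symm σ.2).2
  have hinj : Function.Injective f := by
    rintro ⟨i, s⟩ ⟨i', s'⟩ h
    have h1 : f (i, s) ∈ B i := hmem (i, s)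
    have h2 : f (i', s') ∈ B i' := hmem (i', s')
    rw [h] at h1
    have hii : i = i' := (huniq (f (i', s'))).unique h1 h2
    subst hii
    have hsub : ((B i).equivFinOfCardEq (hcard i)).symm s
        = ((B i).equivFinOfCardEq (hcard i)).symm s' := Subtype.ext h
    have := ((B i).equivFinOfCardEq (hcard i)).symm.injective hsub
    exact Prod.ext rfl this
  have hbij : Function.Bijective f := by
    rw [Fintype.bijective_iff_injective_and_card]
    exact ⟨hinj, by simp [hm]⟩
  refine ⟨Equiv.ofBijective f hbij, fun i => ?_⟩
  symm
  apply Finset.eq_of_subset_of_card_le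
  · intro j hj
    obtain ⟨s, -, rfl⟩ := Finset.mem_image.mp hj
    exact hmem (i, s)
  · have hinj' : Function.Injective (fun s : Fin k => Equiv.ofBijective f hbij (i, s)) := by
      intro s s' h
      have h2 : f (i, s) = f (i, s') := h
      have := hinj h2
      exact (Prod.ext_iff.mp this).2
    rw [Finset.card_image_of_injective _ hinj', Finset.card_univ, Fintype.card_fin, hcard i]

/-- The allocation induced by a maximum-weight perfect matching maximizes the
welfare weighted by `1/(a_i − b_i)` over all balanced allocations, and hence
is fPO. -/
theorem stmt9 (n m k : ℕ) (hm : m = n * k)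
    (a b : Fin n → ℝ) (hb : ∀ i, 0 ≤ b i) (hab : ∀ i, b i < a i)
    (v : Fin n → Fin m → ℝ) (hbi : ∀ i j, v i j = a i ∨ v i j = b i)
    (μ : (Fin n × Fin k) ≃ Fin m)
    (hμ : ∀ μ' : (Fin n × Fin k) ≃ Fin m,
      ∑ σ : Fin n × Fin k, slotw n m k a b v σ (μ' σ) ≤
        ∑ σ : Fin n × Fin k, slotw n m k a b v σ (μ σ))
    (Astar : Fin n → Finset (Fin m))
    (hAstar : ∀ i : Fin n,
      Astar i = (Finset.univ : Finset (Fin k)).image (fun s => μ (i, s))) :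
    (∀ B : Fin n → Finset (Fin m), IsBalanced n m k B →
      ∑ i : Fin n, (∑ j ∈ B i, v i j) / (a i - b i) ≤
        ∑ i : Fin n, (∑ j ∈ Astar i, v i j) / (a i - b i)) ∧
    IsFPO n m k v Astar := by
  have hd : ∀ i, (0:ℝ) < a i - b i := fun i => sub_pos.mpr (hab i)
  have hv : ∀ i j, v i j / (a i - b i)
      = b i / (a i - b i) + (if v i j = a i then (1:ℝ) else 0) := by
    intro i j
    have hdne : a i - b i ≠ 0 := (hd i).ne'
    rcases hbi i j with h | h
    · rw [h, if_pos rfl]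
      field_simp
      ring
    · rw [h, if_neg (hab i).ne, add_zero]
  -- welfare formula for an allocation given by an equivalence
  have wform : ∀ e' : (Fin n × Fin k) ≃ Fin m,
      ∑ i : Fin n, (∑ j ∈ Finset.image (fun s => e' (i, s)) Finset.univ, v i j) / (a i - b i)
        = (∑ σ : Fin n × Fin k, b σ.1 / (a σ.1 - b σ.1))
          + ∑ σ : Fin n × Fin k, (if v σ.1 (e' σ) = a σ.1 then (1:ℝ) else 0) := by
    intro e'
    rw [← Finset.sum_add_distrib, Fintype.sum_prod_type]
    refine Finset.sum_congr rfl fun i _ => ?_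
    have hinj' : ∀ s ∈ (Finset.univ : Finset (Fin k)), ∀ s' ∈ Finset.univ,
        e' (i, s) = e' (i, s') → s = s' := by
      intro s _ s' _ h
      exact (Prod.ext_iff.mp (e'.injective h)).2
    rw [Finset.sum_image hinj', Finset.sum_div]
    exact Finset.sum_congr rfl fun s _ => hv i (e' (i, s))
  constructor
  · -- Part 1
    intro B hB
    obtain ⟨e, he⟩ := balanced_equiv n m k hm B hB
    simp only [he, hAstar]
    rw [wform e, wform μ]
    have := count_le n m k a b hab v μ e (hμ e)
    linarith
  · -- Part 2 : fPO
    rintro ⟨x, ⟨hx0, hxrow, hxcol⟩, hdom, i0, hstrict⟩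
    -- strict weighted inequality
    have h1 : ∑ i : Fin n, (∑ j ∈ Astar i, v i j) / (a i - b i)
        < ∑ i : Fin n, (∑ j : Fin m, v i j * x i j) / (a i - b i) := by
      refine Finset.sum_lt_sum (fun i _ => ?_) ⟨i0, Finset.mem_univ _, ?_⟩
      · exact (div_le_div_iff_of_pos_right (hd i)).mpr (hdom i)
      · exact (div_lt_div_iff_of_pos_right (hd i0)).mpr hstrict
    -- weighted welfare of Astar
    have hAw : ∑ i : Fin n, (∑ j ∈ Astar i, v i j) / (a i - b i)
        = (∑ σ : Fin n × Fin k, b σ.1 / (a σ.1 - b σ.1))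
          + ∑ σ : Fin n × Fin k, (if v σ.1 (μ σ) = a σ.1 then (1:ℝ) else 0) := by
      simp only [hAstar]; exact wform μ
    -- weighted welfare of x
    have hxw : ∑ i : Fin n, (∑ j : Fin m, v i j * x i j) / (a i - b i)
        = (∑ σ : Fin n × Fin k, b σ.1 / (a σ.1 - b σ.1))
          + ∑ i : Fin n, ∑ j : Fin m, (if v i j = a i then (1:ℝ) else 0) * x i j := by
      rw [Fintype.sum_prod_type, ← Finset.sum_add_distrib]
      refine Finset.sum_congr rfl fun i _ => ?_
      have e1 : (∑ j : Fin m, v i j * x i j) / (a i - b i)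
          = ∑ j : Fin m, (b i / (a i - b i) * x i j
              + (if v i j = a i then (1:ℝ) else 0) * x i j) := by
        rw [Finset.sum_div]
        refine Finset.sum_congr rfl fun j _ => ?_
        have : v i j * x i j / (a i - b i) = (v i j / (a i - b i)) * x i j := by ring
        rw [this, hv i j]; ring
      rw [e1, Finset.sum_add_distrib, ← Finset.mul_sum, hxrow i]
      have hc : ∑ y : Fin k, b (i, y).1 / (a (i, y).1 - b (i, y).1)
          = (k : ℝ) * (b i / (a i - b i)) := by
        show (∑ _y : Fin k, b i / (a i - b i)) = (k : ℝ) * (b i / (a i - b i))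
        rw [Finset.sum_const, Finset.card_univ, Fintype.card_fin, nsmul_eq_mul]
      rw [hc]
      ring
    -- the key inequality : S ≤ N
    have hS : ∑ i : Fin n, ∑ j : Fin m, (if v i j = a i then (1:ℝ) else 0) * x i j
        ≤ ∑ σ : Fin n × Fin k, (if v σ.1 (μ σ) = a σ.1 then (1:ℝ) else 0) := by
      by_cases hk : k = 0
      · have hm0 : m = 0 := by rw [hm, hk, mul_zero]
        have hmem : ∀ j : Fin m, False := by
          intro j
          have := j.isLt
          omega
        have hz : ∀ i : Fin n, ∑ j : Fin m, (if v i j = a i then (1:ℝ) else 0) * x i j = 0 :=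
          fun i => Finset.sum_eq_zero fun j _ => absurd trivial (fun _ => hmem j)
        rw [Finset.sum_congr rfl fun i _ => hz i]
        simp only [Finset.sum_const, smul_zero]
        refine Finset.sum_nonneg fun σ _ => by split <;> norm_num
      · have hkR : (k : ℝ) ≠ 0 := Nat.cast_ne_zero.mpr hk
        set y : Matrix (Fin m) (Fin m) ℝ := fun p q => x (μ.symm p).1 q / k with hy
        have hyD : y ∈ doublyStochastic ℝ (Fin m) := by
          rw [mem_doublyStochastic_iff_sum]
          refine ⟨fun p q => div_nonneg (hx0 _ _) (Nat.cast_nonneg k),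
            fun p => ?_, fun q => ?_⟩
          · simp only [hy]
            rw [← Finset.sum_div, hxrow, div_self hkR]
          · rw [← Equiv.sum_comp μ (fun p => y p q)]
            simp only [hy, Equiv.symm_apply_apply]
            rw [Fintype.sum_prod_type]
            have hrow : ∀ i : Fin n, ∑ _s : Fin k, x i q / k = x i q := by
              intro i
              rw [Finset.sum_const, Finset.card_univ, Fintype.card_fin, nsmul_eq_mul]
              field_simp
            rw [Finset.sum_congr rfl fun i _ => hrow i, hxcol q]
        obtain ⟨w, hw0, hw1, hwM⟩ := exists_eq_sum_perm_of_mem_doublyStochastic hyD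
        -- rewrite S as a matrix pairing
        have hSy : ∑ i : Fin n, ∑ j : Fin m, (if v i j = a i then (1:ℝ) else 0) * x i j
            = ∑ p : Fin m, ∑ q : Fin m,
                (if v (μ.symm p).1 q = a (μ.symm p).1 then (1:ℝ) else 0) * y p q := by
          rw [← Equiv.sum_comp μ (fun p => ∑ q : Fin m,
            (if v (μ.symm p).1 q = a (μ.symm p).1 then (1:ℝ) else 0) * y p q)]
          simp only [hy, Equiv.symm_apply_apply]
          rw [Fintype.sum_prod_type]
          refine Finset.sum_congr rfl fun i _ => ?_
          show (∑ j : Fin m, (if v i j = a i then (1:ℝ) else 0) * x i j)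
              = ∑ _s : Fin k, ∑ q : Fin m, (if v i q = a i then (1:ℝ) else 0) * (x i q / k)
          rw [Finset.sum_const, Finset.card_univ, Fintype.card_fin, nsmul_eq_mul,
            Finset.mul_sum]
          refine Finset.sum_congr rfl fun q _ => ?_
          rw [mul_comm ((k:ℝ)), mul_assoc, div_mul_cancel₀ _ hkR]
        rw [hSy, ← hwM]
        -- expand the Birkhoff decomposition
        have hstep : ∀ p : Fin m, ∑ q : Fin m,
            (if v (μ.symm p).1 q = a (μ.symm p).1 then (1:ℝ) else 0)
              * ((∑ π : Equiv.Perm (Fin m), w π • π.permMatrix ℝ) p q)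
            = ∑ π : Equiv.Perm (Fin m),
                w π * (if v (μ.symm p).1 (π p) = a (μ.symm p).1 then (1:ℝ) else 0) := by
          intro p
          simp only [Matrix.sum_apply, Matrix.smul_apply, smul_eq_mul, Finset.mul_sum]
          rw [Finset.sum_comm]
          refine Finset.sum_congr rfl fun π _ => ?_
          simp only [Equiv.Perm.permMatrix, PEquiv.toMatrix_apply, Equiv.toPEquiv_apply,
            Option.mem_def, Option.some.injEq, mul_ite, mul_one, mul_zero]
          rw [Finset.sum_ite_eq (Finset.univ) (π p)
            (fun q => (if v (μ.symm p).1 q = a (μ.symm p).1 then (1:ℝ) else 0) * w π)]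
          simp [mul_comm]
        rw [Finset.sum_congr rfl fun p _ => hstep p, Finset.sum_comm]
        have hπ : ∀ π : Equiv.Perm (Fin m),
            ∑ p : Fin m, (if v (μ.symm p).1 (π p) = a (μ.symm p).1 then (1:ℝ) else 0)
              ≤ ∑ σ : Fin n × Fin k, (if v σ.1 (μ σ) = a σ.1 then (1:ℝ) else 0) := by
          intro π
          have hc := count_le n m k a b hab v μ (μ.trans π) (hμ (μ.trans π))
          rw [← Equiv.sum_comp μ
            (fun p => (if v (μ.symm p).1 (π p) = a (μ.symm p).1 then (1:ℝ) else 0))]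
          convert hc using 1
          exact Finset.sum_congr rfl fun σ _ => by simp only [Equiv.symm_apply_apply, Equiv.trans_apply]; congr
        calc ∑ π : Equiv.Perm (Fin m), ∑ p : Fin m,
              w π * (if v (μ.symm p).1 (π p) = a (μ.symm p).1 then (1:ℝ) else 0)
            = ∑ π : Equiv.Perm (Fin m), w π
                * ∑ p : Fin m, (if v (μ.symm p).1 (π p) = a (μ.symm p).1 then (1:ℝ) else 0) := by
              exact Finset.sum_congr rfl fun π _ => (Finset.mul_sum ..).symm
          _ ≤ ∑ π : Equiv.Perm (Fin m), w π
                * ∑ σ : Fin n × Fin k, (if v σ.1 (μ σ) = a σ.1 then (1:ℝ) else 0) :=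
              Finset.sum_le_sum fun π _ => mul_le_mul_of_nonneg_left (hπ π) (hw0 π)
          _ = ∑ σ : Fin n × Fin k, (if v σ.1 (μ σ) = a σ.1 then (1:ℝ) else 0) := by
              rw [← Finset.sum_mul, hw1, one_mul]
    linarith
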